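/- Suppose r is even and s is even. Then the element γ = a₁a₃a₅⋯a_{r−1} (product of the generators with odd indices) is an odometer; consequently G = ⟨⟨a₁,…,a_r⟩⟩ contains an odometer. -/

import Mathlib

namespace BinTree

/-- Vertices of the infinite rooted binary tree: finite words over `{0,1}`. -/
abbrev Vertex : Type := List Bool

/-- A function on vertices is a tree automorphism function if it preserves lengths
(levels) and prefixes. -/
def IsTreeAutFun (f : Vertex → Vertex) : Prop :=
  (∀ v, (f v).length = v.length) ∧ ∀ v w : Vertex, (f (v ++ w)).take v.length = f v

/-- `Ω`: the automorphism group of the infinite rooted binary tree, realized as the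
subgroup of permutations of the set of vertices preserving the tree structure. -/
def TreeAut : Subgroup (Equiv.Perm Vertex) where
  carrier := {e | IsTreeAutFun ⇑e}
  one_mem' := ⟨fun _ => rfl, fun v w => by
    simpa using List.take_left (l₁ := v) (l₂ := w)⟩
  mul_mem' := by
    rintro a b ha hb
    obtain ⟨ha1, ha2⟩ := ha
    obtain ⟨hb1, hb2⟩ := hb
    refine ⟨fun v => ?_, fun v w => ?_⟩
    · simp [Equiv.Perm.mul_apply, ha1, hb1]
    · have hb' : b (v ++ w) = b v ++ (b (v ++ w)).drop v.length := by
        conv_lhs => rw [← List.take_append_drop v.length (b (v ++ w)), hb2]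
      have hlen : (b v).length = v.length := hb1 v
      calc ((a * b) (v ++ w)).take v.length
          = (a (b v ++ (b (v ++ w)).drop v.length)).take v.length := by
            rw [Equiv.Perm.mul_apply, ← hb']
        _ = a (b v) := by rw [← hlen]; exact ha2 _ _
        _ = (a * b) v := rfl
  inv_mem' := by
    intro a ha
    obtain ⟨ha1, ha2⟩ := ha
    show IsTreeAutFun ⇑a⁻¹
    have hlen : ∀ v : Vertex, (a⁻¹ v).length = v.length := by
      intro v
      have h := ha1 (a⁻¹ v)
      rw [show ∀ x : Vertex, a (a⁻¹ x) = x from Equiv.apply_symm_apply a] at h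
      exact h.symm ▸ rfl
    refine ⟨hlen, fun v w => ?_⟩
    have htl : ((a⁻¹ (v ++ w)).take v.length).length = v.length := by
      rw [List.length_take, hlen, List.length_append]
      omega
    have key : a ((a⁻¹ (v ++ w)).take v.length) = v := by
      have h2 := ha2 ((a⁻¹ (v ++ w)).take v.length) ((a⁻¹ (v ++ w)).drop v.length)
      rw [List.take_append_drop, htl, show ∀ x : Vertex, a (a⁻¹ x) = x from Equiv.apply_symm_apply a] at h2
      rw [← h2]
      simpa using List.take_left (l₁ := v) (l₂ := w)
    have h3 := congrArg (⇑a⁻¹) key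
    rwa [show ∀ x : Vertex, a⁻¹ (a x) = x from Equiv.symm_apply_apply a] at h3

/-- wreath recursion, forward map: `(g,h)σᵗ` -/
def wrFun (g h : Vertex → Vertex) (t : Bool) : Vertex → Vertex
  | [] => []
  | x :: v => (xor x t) :: (cond x (h v) (g v))

/-- wreath recursion, inverse map -/
def wrFunInv (g h : Vertex → Vertex) (t : Bool) : Vertex → Vertex
  | [] => []
  | y :: w => (xor y t) :: (cond (xor y t) (h w) (g w))

/-- `(g,h)σᵗ` as a permutation of the vertices. -/
def wrPerm (g h : Equiv.Perm Vertex) (t : Bool) : Equiv.Perm Vertex where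
  toFun := wrFun ⇑g ⇑h t
  invFun := wrFunInv ⇑g.symm ⇑h.symm t
  left_inv := by
    intro v
    cases v with
    | nil => rfl
    | cons x v => cases x <;> cases t <;> simp [wrFun, wrFunInv]
  right_inv := by
    intro v
    cases v with
    | nil => rfl
    | cons x v => cases x <;> cases t <;> simp [wrFun, wrFunInv]

/-- The element `(g,h)σᵗ` of `Ω`: acts on the first level by `σᵗ` (where `σ` is the
swap of the two level-one subtrees), with section `g` at the vertex `0` and section
`h` at the vertex `1`.  Thus `(γ₀,γ₁)τ` of the wreath recursion
`Ω ≃ (Ω × Ω) ⋊ S₂` is `wr γ₀ γ₁ t` (`t = true` iff `τ = σ`). -/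
def wr (g h : TreeAut) (t : Bool) : TreeAut :=
  ⟨wrPerm g.1 h.1 t, by
    have hg : IsTreeAutFun ⇑g.1 := g.2
    have hh : IsTreeAutFun ⇑h.1 := h.2
    constructor
    · intro v
      cases v with
      | nil => rfl
      | cons x v =>
        cases x <;> simp [wrPerm, wrFun, hg.1, hh.1]
    · intro v w
      cases v with
      | nil => simp [wrPerm, wrFun]
      | cons x v =>
        cases x <;> simp [wrPerm, wrFun, hg.2, hh.2]⟩

/-- Application of a tree automorphism to a vertex. -/
def ap (γ : TreeAut) (v : Vertex) : Vertex := γ.1 v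

/-- The permutation induced by `γ ∈ Ω` on level `n` of the tree. -/
def levelPerm (n : ℕ) (γ : TreeAut) : Equiv.Perm (List.Vector Bool n) where
  toFun v := ⟨γ.1 v.1, by
    have h : IsTreeAutFun ⇑γ.1 := γ.2
    rw [h.1 v.1]; exact v.2⟩
  invFun v := ⟨γ.1.symm v.1, by
    have h : IsTreeAutFun ⇑γ.1 := γ.2
    have h2 := h.1 (γ.1.symm v.1)
    rw [Equiv.apply_symm_apply] at h2
    exact h2.symm.trans v.2⟩
  left_inv v := Subtype.ext (Equiv.symm_apply_apply _ _)
  right_inv v := Subtype.ext (Equiv.apply_symm_apply _ _)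

/-- Restriction to level `n` as a group homomorphism. -/
def levelHom (n : ℕ) : TreeAut →* Equiv.Perm (List.Vector Bool n) where
  toFun := levelPerm n
  map_one' := Equiv.ext fun v => Subtype.ext rfl
  map_mul' := fun g h => Equiv.ext fun v => Subtype.ext rfl

/-- `sgn_n`: the sign of the permutation induced on level `n`. -/
def sgn (n : ℕ) (γ : TreeAut) : ℤˣ := Equiv.Perm.sign (levelPerm n γ)

/-- An odometer: acts as a single `2^n`-cycle on each level `n ≥ 1`. -/
def IsOdometer (γ : TreeAut) : Prop :=
  ∀ n : ℕ, 1 ≤ n → (levelPerm n γ).IsCycle ∧ (levelPerm n γ).support = Finset.univ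

/-- The profinite topology on `Ω`: the coarsest topology making all level
restrictions (to the discrete finite groups) continuous. -/
instance : TopologicalSpace TreeAut :=
  ⨅ n : ℕ, TopologicalSpace.induced (levelPerm n) ⊥

/-- A vertex `w` is in a stable cycle of `γ` of length `k`: its `γ`-orbit has exactly
`k` elements, and for every level `m` above the level of `w`, all level-`m` vertices
lying above this orbit are in one single `γ`-cycle (necessarily of length
`2^(m - n) * k`, which we record via the periodicity condition). -/
def InStableCycle (γ : TreeAut) (w : Vertex) (k : ℕ) : Prop :=
  0 < k ∧ ap (γ ^ k) w = w ∧ (∀ j : ℕ, 0 < j → j < k → ap (γ ^ j) w ≠ w) ∧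
  (∀ u : Vertex, w.length < u.length → (∃ i : ℕ, u.take w.length = ap (γ ^ i) w) →
    (ap (γ ^ (2 ^ (u.length - w.length) * k)) u = u ∧
      ∀ u' : Vertex, u'.length = u.length →
        (∃ i : ℕ, u'.take w.length = ap (γ ^ i) w) → ∃ j : ℕ, ap (γ ^ j) u = u'))

/-- Self-similar subgroup: closed under taking sections (here the section of `γ` at
the first-level vertex `x` is characterized by `(xv)γ = (x)γ ⬝ (v)γₓ`). -/
def SelfSimilar (H : Subgroup TreeAut) : Prop :=
  ∀ γ ∈ H, ∀ x : Bool, ∀ δ : TreeAut,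
    (∀ v : Vertex, ap γ (x :: v) = ap γ [x] ++ ap δ v) → δ ∈ H


lemma ap_mul (γ δ : TreeAut) (v : Vertex) : ap (γ * δ) v = ap γ (ap δ v) := rfl

lemma ap_one (v : Vertex) : ap 1 v = v := rfl

lemma ap_length (γ : TreeAut) (v : Vertex) : (ap γ v).length = v.length := γ.2.1 v

lemma ap_inv_ap (γ : TreeAut) (v : Vertex) : ap γ⁻¹ (ap γ v) = v := by
  rw [← ap_mul, inv_mul_cancel, ap_one]

lemma ap_ap_inv (γ : TreeAut) (v : Vertex) : ap γ (ap γ⁻¹ v) = v := by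
  rw [← ap_mul, mul_inv_cancel, ap_one]

lemma ap_wr_cons (g h : TreeAut) (t x : Bool) (v : Vertex) :
    ap (wr g h t) (x :: v) = (xor x t) :: cond x (ap h v) (ap g v) := rfl

lemma wr_mul (g h g' h' : TreeAut) (t t' : Bool) :
    wr g h t * wr g' h' t' =
      wr ((cond t' h g) * g') ((cond t' g h) * h') (xor t t') := by
  apply Subtype.ext; apply Equiv.ext; intro v
  cases v with
  | nil => cases t' <;> rfl
  | cons x v => cases x <;> cases t <;> cases t' <;> rfl

lemma conj_zpow' (γ δ : TreeAut) (i : ℤ) : (δ⁻¹ * γ * δ)^i = δ⁻¹ * γ^i * δ := by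
  have h : (δ⁻¹ * γ * δ⁻¹⁻¹ : TreeAut)^i = δ⁻¹ * γ^i * δ⁻¹⁻¹ := conj_zpow
  simpa using h

def SC (γ : TreeAut) (v w : Vertex) : Prop := ∃ i : ℤ, ap (γ ^ i) v = w

lemma SC.refl (γ : TreeAut) (v : Vertex) : SC γ v v := ⟨0, by rw [zpow_zero, ap_one]⟩

lemma SC.symm {γ : TreeAut} {v w : Vertex} (h : SC γ v w) : SC γ w v := by
  obtain ⟨i, hi⟩ := h
  exact ⟨-i, by rw [zpow_neg, ← hi, ap_inv_ap]⟩

lemma SC.trans {γ : TreeAut} {u v w : Vertex} (h1 : SC γ u v) (h2 : SC γ v w) : SC γ u w := by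
  obtain ⟨i, hi⟩ := h1; obtain ⟨j, hj⟩ := h2
  exact ⟨j + i, by rw [zpow_add, ap_mul, hi, hj]⟩

lemma SC_conj_all (γ δ : TreeAut) (n : ℕ)
    (H : ∀ v w : Vertex, v.length = n → w.length = n → SC γ v w) :
    ∀ v w : Vertex, v.length = n → w.length = n → SC (δ⁻¹ * γ * δ) v w := by
  intro v w hv hw
  obtain ⟨i, hi⟩ := H (ap δ v) (ap δ w) (by rw [ap_length, hv]) (by rw [ap_length, hw])
  refine ⟨i, ?_⟩
  rw [conj_zpow', ap_mul, ap_mul, hi, ap_inv_ap]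
lemma reduce (g h : TreeAut) (n : ℕ)
    (H : ∀ v w : Vertex, v.length = n → w.length = n → SC (h * g) v w) :
    ∀ v w : Vertex, v.length = n + 1 → w.length = n + 1 → SC (wr g h true) v w := by
  set e := wr g h true with he
  have e0 : ∀ v : Vertex, ap e (false :: v) = true :: ap g v := fun v => rfl
  have e1 : ∀ v : Vertex, ap e (true :: v) = false :: ap h v := fun v => rfl
  have sq : ∀ v : Vertex, ap (e * e) (false :: v) = false :: ap (h * g) v := by
    intro v; rw [ap_mul, e0, e1, ap_mul]
  have powf : ∀ i : ℤ, ∀ v : Vertex,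
      ap ((e * e) ^ i) (false :: v) = false :: ap ((h * g) ^ i) v := by
    intro i
    induction i using Int.induction_on with
    | zero => intro v; rw [zpow_zero, zpow_zero, ap_one, ap_one]
    | succ k ih =>
      intro v
      rw [zpow_add_one, zpow_add_one, ap_mul, sq, ih]; simp [ap_mul]
    | pred k ih =>
      intro v
      have inv1 : ap ((e * e)⁻¹) (false :: v) = false :: ap ((h * g)⁻¹) v := by
        have := sq (ap (h * g)⁻¹ v)
        rw [ap_ap_inv] at this
        rw [← this, ap_inv_ap]
      rw [zpow_sub_one, zpow_sub_one, ap_mul, inv1, ih]; simp [ap_mul]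
  have SCff : ∀ v w : Vertex, v.length = n → w.length = n → SC e (false :: v) (false :: w) := by
    intro v w hv hw
    obtain ⟨i, hi⟩ := H v w hv hw
    refine ⟨2 * i, ?_⟩
    rw [zpow_mul, zpow_two, powf, hi]
  have SCft : ∀ v w : Vertex, v.length = n → w.length = n → SC e (false :: v) (true :: w) := by
    intro v w hv hw
    have h1 : SC e (false :: v) (false :: ap g⁻¹ w) :=
      SCff v _ hv (by rw [ap_length, hw])
    refine h1.trans ⟨1, ?_⟩
    rw [zpow_one, e0, ap_ap_inv]
  have key : ∀ v w : Vertex, v.length = n → w.length = n → ∀ y : Bool, SC e (false :: v) (y :: w) := by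
    intro v w hv hw y; cases y
    · exact SCff v w hv hw
    · exact SCft v w hv hw
  intro v w hv hw
  match v, w with
  | x :: v, y :: w =>
    have hv' : v.length = n := by simpa using hv
    have hw' : w.length = n := by simpa using hw
    cases x
    · exact key v w hv' hw' y
    · have step : SC e (true :: v) (false :: ap h v) := ⟨1, by rw [zpow_one, e1]⟩
      exact step.trans (key (ap h v) w (by rw [ap_length]; exact hv') hw' y)
lemma sameCycle_of_SC {γ : TreeAut} {n : ℕ}
    (H : ∀ v w : Vertex, v.length = n → w.length = n → SC γ v w)
    (x y : List.Vector Bool n) : (levelPerm n γ).SameCycle x y := by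
  obtain ⟨i, hi⟩ := H x.1 y.1 x.2 y.2
  refine ⟨i, ?_⟩
  have hp : (levelPerm n γ) ^ i = levelPerm n (γ ^ i) := by
    have : levelPerm n γ = levelHom n γ := rfl
    rw [this, ← map_zpow]; rfl
  rw [hp]
  exact Subtype.ext hi

lemma fullcycle_of_SC (γ : TreeAut) (n : ℕ) (hn : 1 ≤ n)
    (H : ∀ v w : Vertex, v.length = n → w.length = n → SC γ v w) :
    (levelPerm n γ).IsCycle ∧ (levelPerm n γ).support = Finset.univ := by
  obtain ⟨m, rfl⟩ : ∃ m, n = m + 1 := ⟨n - 1, by omega⟩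
  set π := levelPerm (m + 1) γ with hπ
  have moved : ∀ z : List.Vector Bool (m + 1), π z ≠ z := by
    intro z hz
    obtain ⟨c, cs, hcs⟩ : ∃ c cs, z.1 = c :: cs := by
      cases hzz : z.1 with
      | nil => have := z.2; rw [hzz] at this; simp at this
      | cons c cs => exact ⟨c, cs, rfl⟩
    have hlen : (cs : List Bool).length = m := by
      have := z.2; rw [hcs] at this; simpa using this
    set y : List.Vector Bool (m + 1) := ⟨(!c) :: cs, by simpa using hlen⟩ with hy
    have hne : y ≠ z := by
      intro hyz
      apply Bool.not_ne_self c
      have h2 : ((!c) :: cs : List Bool) = z.1 := congrArg Subtype.val hyz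
      rw [hcs] at h2
      exact List.head_eq_of_cons_eq h2
    obtain ⟨i, hi⟩ := sameCycle_of_SC H z y
    apply hne
    rw [← hi, Equiv.Perm.zpow_apply_eq_self_of_apply_eq_self hz]
  refine ⟨⟨⟨List.replicate (m+1) false, by simp⟩, moved _, fun y _ => sameCycle_of_SC H _ y⟩, ?_⟩
  rw [Finset.eq_univ_iff_forall]
  intro z
  rw [Equiv.Perm.mem_support]
  exact moved z
def pOdd (b : ℕ → TreeAut) : ℕ → TreeAut
  | 0 => 1
  | k+1 => b (2*k+1) * pOdd b k

def pEv (b : ℕ → TreeAut) : ℕ → TreeAut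
  | 0 => 1
  | k+1 => b (2*k+2) * pEv b k

def pH (b : ℕ → TreeAut) (s : ℕ) : ℕ → TreeAut
  | 0 => 1
  | k+1 => b (s + 2*k) * pH b s k

lemma list_eq_pOdd (b : ℕ → TreeAut) (p : ℕ) :
    (List.ofFn (fun j : Fin p => b (2*(j:ℕ)+1))).reverse.prod = pOdd b p := by
  induction p with
  | zero => simp [pOdd]
  | succ p ih =>
    rw [List.ofFn_succ', List.concat_eq_append, List.reverse_append]
    simp only [List.reverse_singleton, List.singleton_append, List.prod_cons]
    rw [pOdd, ← ih]
    congr 1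
lemma claimA (b : ℕ → TreeAut) (Q d : ℕ)
    (hb1 : b 1 = wr (b (2*(Q+1+d))) 1 true)
    (hmid : ∀ i, 2 ≤ i → i ≤ 2*(Q+1) - 1 → b i = wr 1 (b (i-1)) false) :
    (∀ i, 2*(Q+1) + 1 ≤ i → i ≤ 2*(Q+1+d) → b i = wr (b (i-1)) 1 false) →
    pOdd b (Q+1+d) = wr (pEv b Q * b (2*(Q+1+d))) (pH b (2*(Q+1)) d) true := by
  intro hhi
  have step1 : ∀ k, k ≤ Q → pOdd b (k+1) = wr (pEv b k * b (2*(Q+1+d))) 1 true := by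
    intro k
    induction k with
    | zero =>
      intro _
      show b (2*0+1) * pOdd b 0 = wr (pEv b 0 * b (2*(Q+1+d))) 1 true
      show b 1 * 1 = wr (1 * b (2*(Q+1+d))) 1 true
      rw [mul_one, one_mul, hb1]
    | succ k ih =>
      intro hk
      have hbk : b (2*(k+1)+1) = wr 1 (b (2*k+2)) false := by
        rw [hmid (2*(k+1)+1) (by omega) (by omega)]
        have e : 2*(k+1)+1-1 = 2*k+2 := by omega
        rw [e]
      show b (2*(k+1)+1) * pOdd b (k+1) = _
      rw [ih (by omega), hbk, wr_mul]
      simp only [cond_true, one_mul, mul_one, Bool.false_xor]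
      rw [show (pEv b (k+1) : TreeAut) = b (2*k+2) * pEv b k from rfl, mul_assoc]
  have step2 : ∀ j, j ≤ d →
      pOdd b (Q+1+j) = wr (pEv b Q * b (2*(Q+1+d))) (pH b (2*(Q+1)) j) true := by
    intro j
    induction j with
    | zero => intro _; exact step1 Q le_rfl
    | succ j ih =>
      intro hj
      have hbk : b (2*(Q+1+j)+1) = wr (b (2*(Q+1) + 2*j)) 1 false := by
        rw [hhi (2*(Q+1+j)+1) (by omega) (by omega)]
        have e : 2*(Q+1+j)+1-1 = 2*(Q+1) + 2*j := by omega
        rw [e]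
      show b (2*(Q+1+j)+1) * pOdd b (Q+1+j) = _
      rw [ih (by omega), hbk, wr_mul]
      simp only [cond_true, one_mul, mul_one, Bool.false_xor]
      rfl
  exact step2 d le_rfl

lemma claimB_eq (b : ℕ → TreeAut) (P : ℕ)
    (hmid : ∀ i, 2 ≤ i → i ≤ 2*(P+1) - 1 → b i = wr 1 (b (i-1)) false)
    (hs : b (2*(P+1)) = wr 1 (b (2*(P+1)-1)) true) :
    ∀ k, k ≤ P → pEv b k * b (2*(P+1)) = wr (pOdd b k) (b (2*(P+1)-1)) true := by
  intro k
  induction k with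
  | zero =>
    intro _
    show (1 : TreeAut) * b (2*(P+1)) = wr 1 (b (2*(P+1)-1)) true
    rw [one_mul, hs]
  | succ k ih =>
    intro hk
    have hbk : b (2*k+2) = wr 1 (b (2*k+1)) false := by
      rw [hmid (2*k+2) (by omega) (by omega)]
      have e : 2*k+2-1 = 2*k+1 := by omega
      rw [e]
    show (b (2*k+2) * pEv b k) * b (2*(P+1)) = _
    rw [mul_assoc, ih (by omega), hbk, wr_mul]
    simp only [cond_true, one_mul, mul_one, Bool.false_xor]
    rfl

lemma claimB_lt (b : ℕ → TreeAut) (Q d : ℕ)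
    (hmid : ∀ i, 2 ≤ i → i ≤ 2*(Q+1) - 1 → b i = wr 1 (b (i-1)) false)
    (hs : b (2*(Q+1)) = wr 1 (b (2*(Q+1)-1)) true)
    (hhi : ∀ i, 2*(Q+1) + 1 ≤ i → i ≤ 2*(Q+d+2) → b i = wr (b (i-1)) 1 false) :
    pH b (2*(Q+1)) (d+1) * (pEv b Q * b (2*(Q+d+2))) =
      wr (b (2*(Q+d+2)-1)) (pOdd b (Q+1+d)) true := by
  have X : ∀ k, k ≤ Q →
      pEv b k * b (2*(Q+d+2)) = wr (b (2*(Q+d+2)-1)) (pOdd b k) false := by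
    intro k
    induction k with
    | zero =>
      intro _
      show (1 : TreeAut) * b (2*(Q+d+2)) = _
      rw [one_mul, hhi (2*(Q+d+2)) (by omega) (by omega)]
      rfl
    | succ k ih =>
      intro hk
      have hbk : b (2*k+2) = wr 1 (b (2*k+1)) false := by
        rw [hmid (2*k+2) (by omega) (by omega)]
        have e : 2*k+2-1 = 2*k+1 := by omega
        rw [e]
      show (b (2*k+2) * pEv b k) * b (2*(Q+d+2)) = _
      rw [mul_assoc, ih (by omega), hbk, wr_mul]
      simp only [cond_false, one_mul, mul_one, Bool.xor_false]
      rfl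
  have Y : ∀ j, j ≤ d →
      pH b (2*(Q+1)) (j+1) * (pEv b Q * b (2*(Q+d+2))) =
        wr (b (2*(Q+d+2)-1)) (pOdd b (Q+1+j)) true := by
    intro j
    induction j with
    | zero =>
      intro _
      show (b (2*(Q+1) + 2*0) * 1) * (pEv b Q * b (2*(Q+d+2))) = _
      rw [mul_one, X Q le_rfl, show 2*(Q+1)+2*0 = 2*(Q+1) from by omega, hs, wr_mul]
      simp only [cond_false, one_mul, mul_one, Bool.xor_false]
      have e : 2*(Q+1)-1 = 2*Q+1 := by omega
      rw [e]
      rfl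
    | succ j ih =>
      intro hj
      have hbk : b (2*(Q+1) + 2*(j+1)) = wr (b (2*(Q+1+j)+1)) 1 false := by
        rw [hhi (2*(Q+1) + 2*(j+1)) (by omega) (by omega)]
        have e : 2*(Q+1)+2*(j+1)-1 = 2*(Q+1+j)+1 := by omega
        rw [e]
      show (b (2*(Q+1) + 2*(j+1)) * pH b (2*(Q+1)) (j+1)) * (pEv b Q * b (2*(Q+d+2))) = _
      rw [mul_assoc, ih (by omega), hbk, wr_mul]
      simp only [cond_true, one_mul, mul_one, Bool.false_xor]
      rfl
  exact Y d le_rfl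
/-- if r and s are even then γ = a₁a₃⋯a_{r−1} is an odometer;
consequently G = ⟨⟨a₁,…,a_r⟩⟩ contains an odometer. -/
theorem odometer_of_even_even
    (r s : ℕ) (hr : 3 ≤ r) (hs1 : 1 < s) (hsr : s ≤ r)
    (a : ZMod r → TreeAut)
    (ha1 : a 1 = wr (a (r : ZMod r)) 1 true)
    (hmid : ∀ i : ℕ, 2 ≤ i → i ≤ s - 1 → a (i : ZMod r) = wr 1 (a ((i - 1 : ℕ) : ZMod r)) false)
    (has : a (s : ZMod r) = wr 1 (a ((s - 1 : ℕ) : ZMod r)) true)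
    (hhi : ∀ i : ℕ, s + 1 ≤ i → i ≤ r → a (i : ZMod r) = wr (a ((i - 1 : ℕ) : ZMod r)) 1 false)
    (hre : Even r) (hse : Even s) :
    IsOdometer
      ((List.ofFn (fun j : Fin (r / 2) => a ((2 * (j : ℕ) + 1 : ℕ) : ZMod r))).reverse.prod) ∧
    ∃ γ ∈ closure ((Subgroup.closure (Set.range a) : Subgroup TreeAut) : Set TreeAut),
      IsOdometer γ := by
  obtain ⟨p, hp⟩ := hre
  obtain ⟨q, hq⟩ := hse
  obtain ⟨Q, rfl⟩ : ∃ Q, q = Q + 1 := ⟨q - 1, by omega⟩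
  set b : ℕ → TreeAut := fun i => a ((i : ℕ) : ZMod r) with hbdef
  have Hmid : ∀ i, 2 ≤ i → i ≤ 2*(Q+1) - 1 → b i = wr 1 (b (i-1)) false := by
    intro i h1 h2
    exact hmid i h1 (by omega)
  have Hs : b (2*(Q+1)) = wr 1 (b (2*(Q+1)-1)) true := by
    have e : 2*(Q+1) = s := by omega
    rw [e]
    exact has
  have Hb1 : b 1 = wr (b (2*p)) 1 true := by
    have e : 2*p = r := by omega
    rw [e]
    show a ((1:ℕ) : ZMod r) = wr (a ((r:ℕ) : ZMod r)) 1 true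
    rw [Nat.cast_one]
    exact ha1
  have Hhi : ∀ i, 2*(Q+1)+1 ≤ i → i ≤ 2*p → b i = wr (b (i-1)) 1 false := by
    intro i h1 h2
    exact hhi i (by omega) (by omega)
  have memcl : ∀ k, pOdd b k ∈ Subgroup.closure (Set.range a) := by
    intro k
    induction k with
    | zero => exact one_mem _
    | succ k ih => exact mul_mem (Subgroup.subset_closure ⟨_, rfl⟩) ih
  have hr2 : r / 2 = p := by omega
  have Lst : (List.ofFn (fun j : Fin (r / 2) => a ((2 * (j : ℕ) + 1 : ℕ) : ZMod r))).reverse.prod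
      = pOdd b (r/2) := list_eq_pOdd b (r/2)
  suffices MAIN : ∀ n, ∀ v w : Vertex, v.length = n → w.length = n → SC (pOdd b p) v w by
    have od : IsOdometer (pOdd b p) := fun n hn => fullcycle_of_SC _ n hn (MAIN n)
    constructor
    · rw [Lst, hr2]; exact od
    · exact ⟨pOdd b p, _root_.subset_closure (memcl p), od⟩
  rcases Nat.lt_or_ge (Q+1) p with hlt | hge
  · -- q < p
    obtain ⟨d, rfl⟩ : ∃ d, p = Q + d + 2 := ⟨p - Q - 2, by omega⟩
    have A : pOdd b (Q+d+2) = wr (pEv b Q * b (2*(Q+d+2))) (pH b (2*(Q+1)) (d+1)) true := by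
      have h := claimA b Q (d+1)
        (by rw [show 2*(Q+1+(d+1)) = 2*(Q+d+2) from by omega]; exact Hb1) Hmid
        (fun i h1 h2 => Hhi i h1 (by omega))
      rw [show Q+1+(d+1) = Q+d+2 from by omega] at h
      exact h
    have B := claimB_lt b Q d Hmid Hs (fun i h1 h2 => Hhi i h1 (by omega))
    intro n
    induction n using Nat.strong_induction_on with
    | _ n IH =>
      rcases n with _ | m
      · intro v w hv hw
        obtain rfl : v = [] := List.length_eq_zero_iff.mp hv
        obtain rfl : w = [] := List.length_eq_zero_iff.mp hw
        exact SC.refl _ _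
      · rw [A]
        refine reduce _ _ m ?_
        rw [B]
        rcases m with _ | m'
        · intro v w hv hw
          obtain rfl : v = [] := List.length_eq_zero_iff.mp hv
          obtain rfl : w = [] := List.length_eq_zero_iff.mp hw
          exact SC.refl _ _
        · refine reduce _ _ m' ?_
          have conj : pOdd b (Q+1+d) * b (2*(Q+d+2)-1)
              = (b (2*(Q+d+1)+1))⁻¹ * (pOdd b (Q+d+2)) * (b (2*(Q+d+1)+1)) := by
            rw [show 2*(Q+d+2)-1 = 2*(Q+d+1)+1 from by omega,
                show Q+1+d = Q+d+1 from by omega,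
                show (pOdd b (Q+d+2) : TreeAut) = b (2*(Q+d+1)+1) * pOdd b (Q+d+1) from rfl]
            group
          rw [conj]
          exact SC_conj_all _ _ m' (IH m' (by omega))
  · -- q = p
    obtain rfl : p = Q + 1 := by omega
    have A : pOdd b (Q+1) = wr (pEv b Q * b (2*(Q+1))) 1 true := by
      have h := claimA b Q 0
        (by rw [show 2*(Q+1+0) = 2*(Q+1) from by omega]; exact Hb1) Hmid
        (fun i h1 h2 => absurd (h1.trans h2) (by omega))
      exact h
    have B := claimB_eq b Q Hmid Hs Q le_rfl
    intro n
    induction n using Nat.strong_induction_on with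
    | _ n IH =>
      rcases n with _ | m
      · intro v w hv hw
        obtain rfl : v = [] := List.length_eq_zero_iff.mp hv
        obtain rfl : w = [] := List.length_eq_zero_iff.mp hw
        exact SC.refl _ _
      · rw [A]
        refine reduce _ _ m ?_
        rw [one_mul, B]
        rcases m with _ | m'
        · intro v w hv hw
          obtain rfl : v = [] := List.length_eq_zero_iff.mp hv
          obtain rfl : w = [] := List.length_eq_zero_iff.mp hw
          exact SC.refl _ _
        · refine reduce _ _ m' ?_
          have e : b (2*(Q+1)-1) * pOdd b Q = pOdd b (Q+1) := by
            rw [show 2*(Q+1)-1 = 2*Q+1 from by omega]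
            rfl
          rw [e]
          exact IH m' (by omega)

end BinTree
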